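/- Let M be a von Neumann algebra and let ν, ρ be positive linear forms on M. Then sup { |f(1)| : f ∈ Γ_M(ν,ρ) } = inf { (1/2)·Σ_{j=1}^n ( ν(y_j* y_j) + ρ(x_j* x_j) ) : n ∈ ℕ, y_1, x_1, …, y_n, x_n ∈ M with Σ_{j=1}^n y_j* x_j = 1 }. -/

import Mathlib

open scoped ComplexOrder

noncomputable section

variable {H : Type*} [NormedAddCommGroup H] [InnerProductSpace ℂ H] [CompleteSpace H]

/-- A von Neumann algebra is closed under scalar multiplication by complex numbers. -/
instance VonNeumannAlgebra.instSMulMemClass :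
    SMulMemClass (VonNeumannAlgebra H) ℂ (H →L[ℂ] H) where
  smul_mem {s} c x hx := s.toStarSubalgebra.smul_mem hx c

private lemma isClosed_centralizer' {A : Type*} [NormedRing A] (s : Set A) :
    IsClosed (Set.centralizer s) := by
  have h : Set.centralizer s = ⋂ a ∈ s, {x : A | a * x = x * a} := by
    ext x; rw [Set.mem_centralizer_iff]; simp
  rw [h]
  exact isClosed_biInter fun a _ =>
    isClosed_eq (continuous_const.mul continuous_id) (continuous_id.mul continuous_const)

/-- A von Neumann algebra is norm-closed in `B(H)`; consequently the subtype `↥M`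
inherits a C*-algebra structure. -/
instance VonNeumannAlgebra.instIsClosed (M : VonNeumannAlgebra H) :
    IsClosed (M : Set (H →L[ℂ] H)) :=
  M.centralizer_centralizer ▸ isClosed_centralizer' _

variable {M : VonNeumannAlgebra H}

/-- `ν` is a positive linear form on the von Neumann algebra `M`:
a bounded linear functional with `ν(x*x) ≥ 0` for all `x`. -/
def IsPosForm (ν : M →L[ℂ] ℂ) : Prop := ∀ x : M, 0 ≤ ν (star x * x)

/-- The set `Γ_M(ν,ρ) = { f ∈ M* : |f(y*x)|² ≤ ν(y*y)·ρ(x*x) for all x, y ∈ M }`. -/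
def GammaSet (ν ρ : M →L[ℂ] ℂ) : Set (M →L[ℂ] ℂ) :=
  {f | ∀ x y : M, ‖f (star y * x)‖ ^ 2 ≤ (ν (star y * y)).re * (ρ (star x * x)).re}



section PW
variable (ν ρ : M →L[ℂ] ℂ)

private def dval (q : M × M) : ℝ :=
  Real.sqrt (ν (star q.1 * q.1)).re * Real.sqrt (ρ (star q.2 * q.2)).re

private def pSet (z : M) : Set ℝ :=
  {r | ∃ l : List (M × M), (l.map fun q => star q.1 * q.2).sum = z ∧ r = (l.map (dval ν ρ)).sum}

private def pfun (z : M) : ℝ := sInf (pSet ν ρ z)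

variable {ν ρ}

private lemma dval_nonneg (q : M × M) : 0 ≤ dval ν ρ q :=
  mul_nonneg (Real.sqrt_nonneg _) (Real.sqrt_nonneg _)

private lemma pSet_nonneg {z : M} {r : ℝ} (h : r ∈ pSet ν ρ z) : 0 ≤ r := by
  obtain ⟨l, -, rfl⟩ := h
  refine List.sum_nonneg ?_
  intro a ha
  obtain ⟨q, -, rfl⟩ := List.mem_map.mp ha
  exact dval_nonneg q

private lemma single_mem (y x : M) : dval ν ρ (y, x) ∈ pSet ν ρ (star y * x) :=
  ⟨[(y, x)], by simp, by simp⟩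

private lemma pSet_nonempty (z : M) : (pSet ν ρ z).Nonempty := by
  refine ⟨dval ν ρ (1, z), ?_⟩
  have := single_mem (ν := ν) (ρ := ρ) 1 z
  rwa [star_one, one_mul] at this

private lemma pfun_le {z : M} {r : ℝ} (h : r ∈ pSet ν ρ z) : pfun ν ρ z ≤ r :=
  csInf_le ⟨0, fun _ h' => pSet_nonneg h'⟩ h

private lemma pfun_nonneg (z : M) : 0 ≤ pfun ν ρ z :=
  Real.sInf_nonneg (fun _ h => pSet_nonneg h)
private lemma re_nonneg {ν : M →L[ℂ] ℂ} (hν : IsPosForm ν) (x : M) :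
    0 ≤ (ν (star x * x)).re := (Complex.le_def.mp (hν x)).1

private lemma pfun_add (z w : M) : pfun ν ρ (z + w) ≤ pfun ν ρ z + pfun ν ρ w := by
  refine le_of_forall_pos_le_add ?_
  intro ε hε
  obtain ⟨r1, hr1, hr1'⟩ := Real.lt_sInf_add_pos (pSet_nonempty (ν := ν) (ρ := ρ) z) (half_pos hε)
  obtain ⟨r2, hr2, hr2'⟩ := Real.lt_sInf_add_pos (pSet_nonempty (ν := ν) (ρ := ρ) w) (half_pos hε)
  obtain ⟨l1, hl1, rfl⟩ := hr1
  obtain ⟨l2, hl2, rfl⟩ := hr2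
  have hmem : ((l1 ++ l2).map (dval ν ρ)).sum ∈ pSet ν ρ (z + w) :=
    ⟨l1 ++ l2, by rw [List.map_append, List.sum_append, hl1, hl2], rfl⟩
  have := pfun_le hmem
  rw [List.map_append, List.sum_append] at this
  have h2 := add_lt_add hr1' hr2'
  unfold pfun at *
  linarith
private lemma smul_mul_smul' (c d : ℂ) (yv xv : M) :
    (c • yv) * (d • xv) = (c * d) • (yv * xv) := by
  rw [smul_mul_assoc, mul_smul_comm, smul_smul]

private lemma star_smul_mul (c d : ℂ) (yv xv : M) :
    star (c • yv) * (d • xv) = (starRingEnd ℂ c * d) • (star yv * xv) := by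
  rw [star_smul, smul_mul_smul']; rfl

private lemma re_scaled {ν : M →L[ℂ] ℂ} (c : ℝ) (yv : M) :
    (ν (star ((c:ℂ) • yv) * ((c:ℂ) • yv))).re = c ^ 2 * (ν (star yv * yv)).re := by
  rw [star_smul_mul, map_smul, Complex.conj_ofReal, smul_eq_mul]
  rw [← Complex.ofReal_mul, ← sq, Complex.re_ofReal_mul]

private lemma dval_smul (c : ℂ) (q : M × M) :
    dval ν ρ (q.1, c • q.2) = ‖c‖ * dval ν ρ q := by
  unfold dval
  rw [star_smul_mul, map_smul, smul_eq_mul, Complex.conj_mul']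
  have : ((‖c‖ : ℂ) ^ 2 * ρ (star q.2 * q.2)).re
      = ‖c‖ ^ 2 * (ρ (star q.2 * q.2)).re := by
    rw [← Complex.ofReal_pow, Complex.re_ofReal_mul]
  rw [this, Real.sqrt_mul (sq_nonneg _), Real.sqrt_sq (norm_nonneg _)]
  ring
private lemma pSet_smul {z : M} {r : ℝ} (c : ℂ) (h : r ∈ pSet ν ρ z) :
    ‖c‖ * r ∈ pSet ν ρ (c • z) := by
  obtain ⟨l, hl, rfl⟩ := h
  refine ⟨l.map (fun q => (q.1, c • q.2)), ?_, ?_⟩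
  · rw [List.map_map]
    have : ((fun q : M × M => star q.1 * q.2) ∘ fun q : M × M => (q.1, c • q.2))
        = (fun w : M => c • w) ∘ fun q : M × M => star q.1 * q.2 := by
      funext q
      simp only [Function.comp_apply]
      rw [mul_smul_comm]
    rw [this, ← List.map_map, ← List.smul_sum, hl]
  · rw [List.map_map]
    have : (dval ν ρ ∘ fun q : M × M => (q.1, c • q.2))
        = fun q : M × M => ‖c‖ * dval ν ρ q := by
      funext q
      exact dval_smul c q
    rw [this, List.sum_map_mul_left]

private lemma pfun_zero_le : pfun ν ρ (0 : M) ≤ 0 := pfun_le ⟨[], by simp, by simp⟩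

private lemma pfun_smul_le (c : ℂ) (z : M) : pfun ν ρ (c • z) ≤ ‖c‖ * pfun ν ρ z := by
  by_cases hc : c = 0
  · subst hc
    simpa using pfun_zero_le (ν := ν) (ρ := ρ)
  · have hpos : (0:ℝ) < ‖c‖ := norm_pos_iff.mpr hc
    rw [← inv_mul_le_iff₀ hpos]
    exact le_csInf (pSet_nonempty z) fun r hr =>
      (inv_mul_le_iff₀ hpos).mpr (pfun_le (pSet_smul c hr))

private lemma pfun_smul_eq {c : ℂ} (hc : c ≠ 0) (z : M) :
    pfun ν ρ (c • z) = ‖c‖ * pfun ν ρ z := by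
  refine le_antisymm (pfun_smul_le c z) ?_
  have h := pfun_smul_le (ν := ν) (ρ := ρ) c⁻¹ (c • z)
  rw [inv_smul_smul₀ hc, norm_inv] at h
  have := mul_le_mul_of_nonneg_left h (norm_nonneg c)
  rwa [mul_inv_cancel_left₀ (ne_of_gt (norm_pos_iff.mpr hc))] at this

private lemma real_smul_eq (t : ℝ) (z : M) : t • z = (t : ℂ) • z := by
  rw [← smul_one_smul ℂ t z, Complex.real_smul, mul_one]

private lemma pfun_real_smul {t : ℝ} (ht : 0 < t) (z : M) :
    pfun ν ρ (t • z) = t * pfun ν ρ z := by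
  rw [real_smul_eq, pfun_smul_eq (by exact_mod_cast ht.ne' : (t:ℂ) ≠ 0),
    Complex.norm_real, Real.norm_of_nonneg ht.le]

private lemma pfun_bound (z : M) :
    pfun ν ρ z ≤ (Real.sqrt (ν 1).re * Real.sqrt ‖ρ‖) * ‖z‖ := by
  have h1 : pfun ν ρ z ≤ dval ν ρ (1, z) := by
    have := single_mem (ν := ν) (ρ := ρ) 1 z
    rw [star_one, one_mul] at this
    exact pfun_le this
  refine h1.trans ?_
  unfold dval
  simp only [star_one, one_mul]
  rw [mul_assoc]
  refine mul_le_mul_of_nonneg_left ?_ (Real.sqrt_nonneg _)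
  have h2 : (ρ (star z * z)).re ≤ ‖ρ‖ * ‖z‖ ^ 2 := by
    calc (ρ (star z * z)).re ≤ ‖ρ (star z * z)‖ := by
          exact Complex.re_le_norm _
      _ ≤ ‖ρ‖ * ‖star z * z‖ := ρ.le_opNorm _
      _ ≤ ‖ρ‖ * (‖star z‖ * ‖z‖) := by
          refine mul_le_mul_of_nonneg_left (norm_mul_le _ _) (norm_nonneg _)
      _ = ‖ρ‖ * ‖z‖ ^ 2 := by rw [norm_star]; ring
  calc Real.sqrt (ρ (star z * z)).re ≤ Real.sqrt (‖ρ‖ * ‖z‖ ^ 2) := Real.sqrt_le_sqrt h2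
    _ = Real.sqrt ‖ρ‖ * ‖z‖ := by
        rw [Real.sqrt_mul (norm_nonneg _), Real.sqrt_sq (norm_nonneg _)]
private lemma exists_F (hν : IsPosForm ν) (hρ : IsPosForm ρ) (h1 : (1 : M) ≠ 0) :
    ∃ F : M →L[ℂ] ℂ, F ∈ GammaSet ν ρ ∧ pfun ν ρ 1 ≤ ‖F 1‖ := by
  have hf : ∀ x : (LinearPMap.mkSpanSingleton (K := ℝ) (L := ℝ) (σ := RingHom.id ℝ) (1 : M) (pfun ν ρ 1) h1).domain,
      (LinearPMap.mkSpanSingleton (K := ℝ) (L := ℝ) (σ := RingHom.id ℝ) (1 : M) (pfun ν ρ 1) h1) x ≤ pfun ν ρ x := by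
    rintro ⟨x, hx⟩
    obtain ⟨c, hc⟩ := Submodule.mem_span_singleton.mp hx
    have hxe : (⟨x, hx⟩ : (LinearPMap.mkSpanSingleton (K := ℝ) (L := ℝ) (σ := RingHom.id ℝ) (1 : M) (pfun ν ρ 1) h1).domain)
        = ⟨c • (1 : M), hc ▸ hx⟩ := Subtype.ext hc.symm
    rw [hxe, LinearPMap.mkSpanSingleton'_apply]
    simp only [smul_eq_mul]
    rcases lt_trichotomy c 0 with h | h | h
    · have h2 : c * pfun ν ρ 1 ≤ 0 :=
        mul_nonpos_iff.mpr (Or.inr ⟨h.le, pfun_nonneg 1⟩)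
      exact h2.trans (pfun_nonneg _)
    · subst h
      simpa using pfun_nonneg (ν := ν) (ρ := ρ) ((0:ℝ) • (1:M))
    · rw [pfun_real_smul h]; exact le_rfl
  obtain ⟨g, hg1, hgle⟩ := exists_extension_of_le_sublinear
    (LinearPMap.mkSpanSingleton (K := ℝ) (L := ℝ) (σ := RingHom.id ℝ) (1 : M) (pfun ν ρ 1) h1) (pfun ν ρ)
    (fun c hc x => pfun_real_smul hc x) (fun x y => pfun_add x y) hf
  · set F0 : M →ₗ[ℂ] ℂ := g.extendTo𝕜' with hF0
    have hg1' : g 1 = pfun ν ρ 1 := by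
      have := hg1 ⟨1, Submodule.mem_span_singleton_self (1 : M)⟩
      rwa [LinearPMap.mkSpanSingleton_apply] at this
    have hFb : ∀ z : M, ‖F0 z‖ ≤ pfun ν ρ z := by
      intro z
      by_cases h : F0 z = 0
      · rw [h, norm_zero]; exact pfun_nonneg z
      · have hsq := g.norm_extendTo𝕜'_apply_sq (𝕜 := ℂ) z
        have h2 : (g ((starRingEnd ℂ) (F0 z) • z) : ℝ) ≤ ‖F0 z‖ * pfun ν ρ z := by
          refine (hgle _).trans ?_
          have h3 := pfun_smul_le (ν := ν) (ρ := ρ) ((starRingEnd ℂ) (F0 z)) z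
          rwa [RCLike.norm_conj] at h3
        have hpos : 0 < ‖F0 z‖ := norm_pos_iff.mpr h
        rw [show F0 z = (Module.Dual.extendRCLike g) z from rfl] at h2 hpos ⊢
        nlinarith [hsq, h2]
    have hbound : ∀ z : M, ‖F0 z‖ ≤ (Real.sqrt (ν 1).re * Real.sqrt ‖ρ‖) * ‖z‖ :=
      fun z => (hFb z).trans (pfun_bound z)
    refine ⟨LinearMap.mkContinuous F0 _ hbound, ?_, ?_⟩
    · intro x y
      have hb := (hFb (star y * x)).trans (pfun_le (single_mem y x))
      have ha1 := re_nonneg hν y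
      have hb1 := re_nonneg hρ x
      have hsq := pow_le_pow_left₀ (norm_nonneg _) hb 2
      unfold dval at hsq
      rw [mul_pow, Real.sq_sqrt ha1, Real.sq_sqrt hb1] at hsq
      simpa [LinearMap.mkContinuous_apply] using hsq
    · have hre : RCLike.re (F0 1) = g 1 := g.extendTo𝕜'_apply_re (𝕜 := ℂ) 1
      calc pfun ν ρ 1 = RCLike.re (F0 1) := by rw [hre, hg1']
        _ ≤ ‖F0 1‖ := RCLike.re_le_norm _
        _ = ‖(LinearMap.mkContinuous F0 _ hbound) 1‖ := by
            rw [LinearMap.mkContinuous_apply]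
private lemma rescale_real {a b δ : ℝ} (ha : 0 ≤ a) (hb : 0 ≤ b) (hδ : 0 < δ) :
    ∃ c : ℝ, 0 < c ∧ c ^ 2 * a + (c⁻¹) ^ 2 * b ≤ 2 * (Real.sqrt a * Real.sqrt b) + δ := by
  rcases eq_or_lt_of_le ha with h | hapos
  · -- a = 0
    have hpos : (0:ℝ) < (b + δ) / δ := div_pos (by linarith) hδ
    refine ⟨Real.sqrt ((b + δ) / δ), Real.sqrt_pos.mpr hpos, ?_⟩
    rw [Real.sq_sqrt hpos.le, ← Real.sqrt_inv, Real.sq_sqrt (inv_nonneg.mpr hpos.le), ← h]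
    have h2 : ((b + δ) / δ)⁻¹ * b ≤ δ := by
      rw [inv_div, div_mul_eq_mul_div, div_le_iff₀ (by linarith : (0:ℝ) < b + δ)]
      nlinarith
    have h3 : 0 ≤ Real.sqrt 0 * Real.sqrt b := by positivity
    nlinarith
  rcases eq_or_lt_of_le hb with h | hbpos
  · -- b = 0
    have hpos : (0:ℝ) < δ / (a + δ) := div_pos hδ (by linarith)
    refine ⟨Real.sqrt (δ / (a + δ)), Real.sqrt_pos.mpr hpos, ?_⟩
    rw [Real.sq_sqrt hpos.le, ← Real.sqrt_inv, Real.sq_sqrt (inv_nonneg.mpr hpos.le), ← h]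
    have h2 : δ / (a + δ) * a ≤ δ := by
      rw [div_mul_eq_mul_div, div_le_iff₀ (by linarith : (0:ℝ) < a + δ)]
      nlinarith
    have h3 : 0 ≤ Real.sqrt a * Real.sqrt 0 := by positivity
    nlinarith
  · -- both positive
    have hsa : (0:ℝ) < Real.sqrt a := Real.sqrt_pos.mpr hapos
    have hsb : (0:ℝ) < Real.sqrt b := Real.sqrt_pos.mpr hbpos
    have hpos : (0:ℝ) < Real.sqrt b / Real.sqrt a := div_pos hsb hsa
    refine ⟨Real.sqrt (Real.sqrt b / Real.sqrt a), Real.sqrt_pos.mpr hpos, ?_⟩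
    rw [Real.sq_sqrt hpos.le, ← Real.sqrt_inv, Real.sq_sqrt (inv_nonneg.mpr hpos.le), inv_div]
    have e1 : Real.sqrt b / Real.sqrt a * a = Real.sqrt a * Real.sqrt b := by
      rw [div_mul_eq_mul_div, mul_div_assoc, Real.div_sqrt]
      ring
    have e2 : Real.sqrt a / Real.sqrt b * b = Real.sqrt a * Real.sqrt b := by
      rw [div_mul_eq_mul_div, mul_div_assoc, Real.div_sqrt]
    rw [e1, e2]
    linarith

private lemma rescale_pair (hν : IsPosForm ν) (hρ : IsPosForm ρ) (q : M × M) {δ : ℝ}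
    (hδ : 0 < δ) :
    ∃ q' : M × M, star q'.1 * q'.2 = star q.1 * q.2 ∧
      (ν (star q'.1 * q'.1)).re + (ρ (star q'.2 * q'.2)).re ≤ 2 * dval ν ρ q + δ := by
  obtain ⟨c, hc, hle⟩ := rescale_real (re_nonneg hν q.1) (re_nonneg hρ q.2) hδ
  refine ⟨((c : ℂ) • q.1, ((c : ℂ))⁻¹ • q.2), ?_, ?_⟩
  · rw [star_smul_mul, Complex.conj_ofReal,
      mul_inv_cancel₀ (by exact_mod_cast hc.ne' : (c:ℂ) ≠ 0), one_smul]
  · have e1 := re_scaled (ν := ν) c q.1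
    have e2 : ((ρ (star (((c:ℂ))⁻¹ • q.2) * (((c:ℂ))⁻¹ • q.2))).re)
        = (c⁻¹) ^ 2 * (ρ (star q.2 * q.2)).re := by
      rw [← Complex.ofReal_inv]
      exact re_scaled (ν := ρ) c⁻¹ q.2
    dsimp only
    rw [e1, e2]
    unfold dval
    exact hle

private lemma rescale_list (hν : IsPosForm ν) (hρ : IsPosForm ρ) :
    ∀ (l : List (M × M)) {δ : ℝ}, 0 < δ →
    ∃ l' : List (M × M),
      (l'.map fun q => star q.1 * q.2).sum = (l.map fun q => star q.1 * q.2).sum ∧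
      (l'.map fun q => (ν (star q.1 * q.1)).re + (ρ (star q.2 * q.2)).re).sum
        ≤ 2 * (l.map (dval ν ρ)).sum + δ := by
  intro l
  induction l with
  | nil =>
    intro δ hδ
    exact ⟨[], rfl, by simp; linarith⟩
  | cons q t ih =>
    intro δ hδ
    obtain ⟨t', ht1, ht2⟩ := ih (half_pos hδ)
    obtain ⟨q', hq1, hq2⟩ := rescale_pair hν hρ q (half_pos hδ)
    refine ⟨q' :: t', ?_, ?_⟩ <;> simp only [List.map_cons, List.sum_cons]
    · rw [hq1, ht1]
    · rw [mul_add]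
      linarith

private lemma sum_get {α : Type*} [AddCommMonoid α] (l : List (M × M)) (f : M × M → α) :
    (l.map f).sum = ∑ j : Fin l.length, f (l.get j) := by
  conv_lhs => rw [← List.ofFn_get l]
  rw [List.map_ofFn, List.sum_ofFn]
  rfl

private lemma gamma_le_T (hν : IsPosForm ν) (hρ : IsPosForm ρ) {f : M →L[ℂ] ℂ}
    (hf : f ∈ GammaSet ν ρ) {n : ℕ} (y x : Fin n → M)
    (hsum : (∑ j, star (y j) * x j) = 1) :
    ‖f 1‖ ≤ (1/2) * ∑ j, ((ν (star (y j) * y j)).re + (ρ (star (x j) * x j)).re) := by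
  have h1 : ‖f 1‖ ≤ ∑ j, ‖f (star (y j) * x j)‖ := by
    rw [← hsum, map_sum]
    exact norm_sum_le _ _
  refine h1.trans ?_
  rw [Finset.mul_sum]
  refine Finset.sum_le_sum ?_
  intro j _
  have h2 := hf (x j) (y j)
  have ha := re_nonneg hν (y j)
  have hb := re_nonneg hρ (x j)
  have h3 : ‖f (star (y j) * x j)‖
      ≤ Real.sqrt (ν (star (y j) * y j)).re * Real.sqrt (ρ (star (x j) * x j)).re := by
    have h4 := Real.sqrt_le_sqrt h2
    rwa [Real.sqrt_sq (norm_nonneg _), Real.sqrt_mul ha] at h4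
  refine h3.trans ?_
  have h5 := two_mul_le_add_sq (Real.sqrt (ν (star (y j) * y j)).re)
    (Real.sqrt (ρ (star (x j) * x j)).re)
  rw [Real.sq_sqrt ha, Real.sq_sqrt hb] at h5
  linarith

end PW

theorem sup_gamma_one_eq_inf_doubleSystems
    (ν ρ : M →L[ℂ] ℂ) (hν : IsPosForm ν) (hρ : IsPosForm ρ) :
    sSup {r : ℝ | ∃ f ∈ GammaSet ν ρ, r = ‖f 1‖} =
    sInf {r : ℝ | ∃ (n : ℕ) (y x : Fin n → M),
        (∑ j, star (y j) * x j) = 1 ∧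
        r = (1/2) * ∑ j, ((ν (star (y j) * y j)).re + (ρ (star (x j) * x j)).re)} := by
  set S := {r : ℝ | ∃ f ∈ GammaSet ν ρ, r = ‖f 1‖} with hSdef
  set T := {r : ℝ | ∃ (n : ℕ) (y x : Fin n → M),
        (∑ j, star (y j) * x j) = 1 ∧
        r = (1/2) * ∑ j, ((ν (star (y j) * y j)).re + (ρ (star (x j) * x j)).re)} with hTdef
  have hzeroΓ : (0 : M →L[ℂ] ℂ) ∈ GammaSet ν ρ := by
    intro x y
    simp only [ContinuousLinearMap.zero_apply, norm_zero, ne_eq, OfNat.ofNat_ne_zero,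
      not_false_eq_true, zero_pow]
    exact mul_nonneg (re_nonneg hν y) (re_nonneg hρ x)
  have hzero : (0 : ℝ) ∈ S := ⟨0, hzeroΓ, by simp⟩
  have hT0 : ∀ t ∈ T, (0:ℝ) ≤ t := by
    rintro t ⟨n, y, x, -, rfl⟩
    exact mul_nonneg (by norm_num)
      (Finset.sum_nonneg fun j _ => add_nonneg (re_nonneg hν _) (re_nonneg hρ _))
  have hTne : T.Nonempty :=
    ⟨_, 1, fun _ => 1, fun _ => 1, by simp, rfl⟩
  rcases subsingleton_or_nontrivial ↥M with hsub | hnt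
  · have hT0mem : (0:ℝ) ∈ T := by
      refine ⟨0, Fin.elim0, Fin.elim0, Subsingleton.elim _ _, by simp⟩
    have hSle : ∀ s ∈ S, s ≤ 0 := by
      rintro s ⟨f, -, rfl⟩
      have h1 : (1 : M) = 0 := Subsingleton.elim _ _
      rw [h1, map_zero, norm_zero]
    have e1 : sSup S = 0 := le_antisymm (csSup_le ⟨0, hzero⟩ hSle) (le_csSup ⟨0, hSle⟩ hzero)
    have e2 : sInf T = 0 := le_antisymm (csInf_le ⟨0, hT0⟩ hT0mem) (le_csInf hTne hT0)
    rw [e1, e2]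
  · have h1 : (1 : M) ≠ 0 := one_ne_zero
    obtain ⟨F, hFΓ, hF1⟩ := exists_F hν hρ h1
    have easy : ∀ s ∈ S, ∀ t ∈ T, s ≤ t := by
      rintro s ⟨f, hf, rfl⟩ t ⟨n, y, x, hsum, rfl⟩
      exact gamma_le_T hν hρ hf y x hsum
    have hbddS : BddAbove S := by
      obtain ⟨t0, ht0⟩ := hTne
      exact ⟨t0, fun s hs => easy s hs t0 ht0⟩
    refine le_antisymm (csSup_le ⟨0, hzero⟩ fun s hs => le_csInf hTne (easy s hs)) ?_
    have hinf : sInf T ≤ pfun ν ρ 1 := by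
      refine le_of_forall_pos_le_add ?_
      intro ε hε
      obtain ⟨r, hr, hrlt⟩ :=
        Real.lt_sInf_add_pos (pSet_nonempty (ν := ν) (ρ := ρ) 1) (half_pos hε)
      obtain ⟨l, hl, rfl⟩ := hr
      obtain ⟨l', hl1, hl2⟩ := rescale_list hν hρ l hε
      have hmem : (1/2) * ∑ j : Fin l'.length,
          ((ν (star ((l'.get j).1) * (l'.get j).1)).re
            + (ρ (star ((l'.get j).2) * (l'.get j).2)).re) ∈ T := by
        refine ⟨l'.length, fun j => (l'.get j).1, fun j => (l'.get j).2, ?_, rfl⟩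
        rw [← sum_get l' (fun q => star q.1 * q.2), hl1, hl]
      have hle := csInf_le ⟨0, hT0⟩ hmem
      rw [← sum_get l' (fun q => (ν (star q.1 * q.1)).re + (ρ (star q.2 * q.2)).re)] at hle
      have hpr : pfun ν ρ (1 : M) = sInf (pSet ν ρ 1) := rfl
      rw [hpr]
      linarith
    calc sInf T ≤ pfun ν ρ 1 := hinf
      _ ≤ ‖F 1‖ := hF1
      _ ≤ sSup S := le_csSup hbddS ⟨F, hFΓ, rfl⟩
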